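/- arXiv:2305.16891 — 2 statements merged into one kernel-verified Lean document; each statement's English description precedes it below -/
import Mathlib

section
/- Let $\ell(W;z) = \frac{1}{2}(f_W(x) - y)^2$ where $f_W(x) = m^{-c}\sum_{k=1}^m a_k \sigma(\langle w_k,x\rangle)$, $a_k \in \{-1,1\}$, $|\sigma(a)| \le B_\sigma$, $|\sigma'(a)| \le B_{\sigma'}$, $|\sigma''(a)| \le B_{\sigma''}$, $\|x\| \le c_x$, $|y| \le c_y$. Then the largest eigenvalue of the Hessian $\nabla_W^2 \ell(W;z)$ is at most $c_x^2\big( \frac{B_{\sigma'}^2 + B_\sigma B_{\sigma''}}{m^{2c-1}} + \frac{B_{\sigma''} c_y}{m^c}\big)$ for every $W$. -/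
open scoped InnerProductSpace

set_option maxHeartbeats 1000000 in
/-- Smoothness bound for the square loss of a two-layer network: the largest
eigenvalue of the Hessian of `W ↦ ½(f_W(x) - y)²` is at most
`c_x² ((B_{σ'}² + B_σ B_{σ''})/m^{2c-1} + B_{σ''} c_y / m^c)`, expressed via the
Hessian quadratic form. -/
theorem two_layer_loss_hessian_upper_bound {d m : ℕ} (hm : 0 < m)
    (c cx cy Bσ B' B'' : ℝ) (hc : c ∈ Set.Icc (1 / 2 : ℝ) 1)
    (σ : ℝ → ℝ) (hσsmooth : ContDiff ℝ 2 σ)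
    (hσ : ∀ t : ℝ, |σ t| ≤ Bσ) (hσ' : ∀ t : ℝ, |deriv σ t| ≤ B')
    (hσ'' : ∀ t : ℝ, |deriv (deriv σ) t| ≤ B'')
    (a : Fin m → ℝ) (ha : ∀ k, a k = 1 ∨ a k = -1)
    (x : EuclideanSpace ℝ (Fin d)) (hx : ‖x‖ ≤ cx)
    (y : ℝ) (hy : |y| ≤ cy)
    (W : PiLp 2 (fun _ : Fin m => EuclideanSpace ℝ (Fin d))) :
    ∀ v : PiLp 2 (fun _ : Fin m => EuclideanSpace ℝ (Fin d)),
      iteratedFDeriv ℝ 2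
          (fun V : PiLp 2 (fun _ : Fin m => EuclideanSpace ℝ (Fin d)) =>
            (1 / 2) * ((m : ℝ) ^ (-c) * ∑ k, a k * σ ⟪V k, x⟫_ℝ - y) ^ 2) W ![v, v]
        ≤ cx ^ 2 * ((B' ^ 2 + Bσ * B'') / (m : ℝ) ^ (2 * c - 1)
            + B'' * cy / (m : ℝ) ^ c) * ‖v‖ ^ 2 := by
  intro v
  classical
  let E := PiLp 2 (fun _ : Fin m => EuclideanSpace ℝ (Fin d))
  haveI : ContinuousSMul ℝ E := inferInstance
  have hσd : Differentiable ℝ σ := hσsmooth.differentiable (by norm_num)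
  have hσ2 : ContDiff ℝ ((1 : WithTop ℕ∞) + 1) σ := by norm_num; exact hσsmooth
  have hσ'd : Differentiable ℝ (deriv σ) :=
    ((contDiff_succ_iff_deriv.mp hσ2).2.2).differentiable (by norm_num)
  set L : Fin m → (E →L[ℝ] ℝ) :=
    fun k => (innerSL ℝ x).comp (PiLp.proj 2 (fun _ : Fin m => EuclideanSpace ℝ (Fin d)) k)
    with hLdef
  have hL : ∀ (k : Fin m) (V : E), L k V = ⟪V k, x⟫_ℝ := by
    intro k V
    simp only [hLdef, ContinuousLinearMap.comp_apply, innerSL_apply_apply, PiLp.proj_apply]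
    exact real_inner_comm _ _
  set φ : E → ℝ := fun V => (m : ℝ) ^ (-c) * ∑ k, a k * σ (L k V) - y with hφdef
  set Dφ : E → (E →L[ℝ] ℝ) :=
    fun V => (m : ℝ) ^ (-c) • ∑ k, (a k * deriv σ (L k V)) • L k with hDφdef
  have hφ : ∀ V : E, HasFDerivAt φ (Dφ V) V := by
    intro V
    have h1 : ∀ k : Fin m,
        HasFDerivAt (fun U : E => a k * σ (L k U)) ((a k * deriv σ (L k V)) • L k) V := by
      intro k
      have hs : HasDerivAt σ (deriv σ (L k V)) (L k V) := (hσd _).hasDerivAt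
      have h2 := (hs.comp_hasFDerivAt V (L k).hasFDerivAt).const_mul (a k)
      have : a k • deriv σ (L k V) • L k = (a k * deriv σ (L k V)) • L k := by
        rw [smul_smul]
      rw [this] at h2
      exact h2
    have hsum := HasFDerivAt.fun_sum (u := Finset.univ) (fun k _ => h1 k)
    have h3 := (hsum.const_mul ((m : ℝ) ^ (-c))).sub_const y
    exact h3
  set D2 : E →L[ℝ] (E →L[ℝ] ℝ) :=
    (m : ℝ) ^ (-c) • ∑ k, ((a k * deriv (deriv σ) (L k W)) • L k).smulRight (L k) with hD2def
  have hDφW : HasFDerivAt Dφ D2 W := by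
    have h1 : ∀ k : Fin m,
        HasFDerivAt (fun U : E => (a k * deriv σ (L k U)) • L k)
          (((a k * deriv (deriv σ) (L k W)) • L k).smulRight (L k)) W := by
      intro k
      have hs : HasDerivAt (deriv σ) (deriv (deriv σ) (L k W)) (L k W) := (hσ'd _).hasDerivAt
      have h2 := ((hs.comp_hasFDerivAt W (L k).hasFDerivAt).const_mul (a k)).smul_const (L k)
      have : a k • deriv (deriv σ) (L k W) • L k = (a k * deriv (deriv σ) (L k W)) • L k := by
        rw [smul_smul]
      rw [this] at h2
      exact h2
    exact (HasFDerivAt.fun_sum (u := Finset.univ) (fun k _ => h1 k)).const_smul ((m : ℝ) ^ (-c))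
  set F : E → (E →L[ℝ] ℝ) := fun V => φ V • Dφ V with hFdef
  have hg : ∀ V : E, HasFDerivAt (fun U : E => (1 / 2) * φ U ^ 2) (F V) V := by
    intro V
    have h0 := ((hφ V).mul (hφ V)).const_mul (1 / 2 : ℝ)
    have hfn : (fun U : E => (1 / 2 : ℝ) * (φ U * φ U)) = fun U : E => (1 / 2 : ℝ) * φ U ^ 2 := by
      funext U; ring
    have hder : (1 / 2 : ℝ) • (φ V • Dφ V + φ V • Dφ V) = F V := by
      rw [← two_smul ℝ (φ V • Dφ V), smul_smul]
      norm_num [hFdef]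
    simp only [Pi.mul_apply] at h0
    rw [hfn, hder] at h0
    exact h0
  have hDF : HasFDerivAt F (φ W • D2 + (Dφ W).smulRight (Dφ W)) W := (hφ W).smul hDφW
  have hfun : (fun V : E =>
        (1 / 2) * ((m : ℝ) ^ (-c) * ∑ k, a k * σ ⟪V k, x⟫_ℝ - y) ^ 2)
      = fun V : E => (1 / 2) * φ V ^ 2 := by
    funext V
    simp only [hφdef, hL]
  have hfd : fderiv ℝ (fun U : E => (1 / 2) * φ U ^ 2) = F := funext fun V => (hg V).fderiv
  rw [hfun, iteratedFDeriv_two_apply, hfd, hDF.fderiv]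
  simp only [Matrix.cons_val_zero, Matrix.cons_val_one, Matrix.head_cons]
  -- compute the value
  have hval : ((φ W • D2 + (Dφ W).smulRight (Dφ W)) v) v
      = (Dφ W v) ^ 2 + φ W * (D2 v v) := by
    simp only [ContinuousLinearMap.add_apply, ContinuousLinearMap.smul_apply,
      ContinuousLinearMap.smulRight_apply, smul_eq_mul]
    ring
  rw [hval]
  -- basic nonnegativity
  have hcx : (0 : ℝ) ≤ cx := le_trans (norm_nonneg x) hx
  have hcy : (0 : ℝ) ≤ cy := le_trans (abs_nonneg y) hy
  have hBσ : (0 : ℝ) ≤ Bσ := le_trans (abs_nonneg _) (hσ 0)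
  have hB' : (0 : ℝ) ≤ B' := le_trans (abs_nonneg _) (hσ' 0)
  have hB'' : (0 : ℝ) ≤ B'' := le_trans (abs_nonneg _) (hσ'' 0)
  have hmpos : (0 : ℝ) < (m : ℝ) := by exact_mod_cast hm
  have hmc : (0 : ℝ) < (m : ℝ) ^ (-c) := Real.rpow_pos_of_pos hmpos _
  -- bound on coordinates
  have hu : ∀ k : Fin m, |L k v| ≤ cx * ‖v k‖ := by
    intro k
    rw [hL]
    calc |⟪v k, x⟫_ℝ| ≤ ‖v k‖ * ‖x‖ := abs_real_inner_le_norm _ _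
      _ ≤ ‖v k‖ * cx := by gcongr
      _ = cx * ‖v k‖ := by ring
  have hnormv : ∑ k : Fin m, ‖v k‖ ^ 2 = ‖v‖ ^ 2 := (PiLp.norm_sq_eq_of_L2 _ v).symm
  have hS2 : ∑ k : Fin m, (L k v) ^ 2 ≤ cx ^ 2 * ‖v‖ ^ 2 := by
    calc ∑ k : Fin m, (L k v) ^ 2 ≤ ∑ k : Fin m, (cx * ‖v k‖) ^ 2 := by
          apply Finset.sum_le_sum
          intro k _
          rw [← sq_abs (L k v)]
          exact pow_le_pow_left₀ (abs_nonneg _) (hu k) 2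
      _ = cx ^ 2 * ∑ k : Fin m, ‖v k‖ ^ 2 := by rw [Finset.mul_sum]; ring_nf
      _ = cx ^ 2 * ‖v‖ ^ 2 := by rw [hnormv]
  have hS2nonneg : (0 : ℝ) ≤ ∑ k : Fin m, (L k v) ^ 2 :=
    Finset.sum_nonneg fun k _ => sq_nonneg _
  -- bound on Dφ W v
  have hA : |Dφ W v| ≤ (m : ℝ) ^ (-c) * B' * ∑ k : Fin m, |L k v| := by
    have : Dφ W v = (m : ℝ) ^ (-c) * ∑ k : Fin m, (a k * deriv σ (L k W)) * L k v := by
      simp only [hDφdef, ContinuousLinearMap.smul_apply, ContinuousLinearMap.sum_apply,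
        smul_eq_mul]
    rw [this, abs_mul, abs_of_pos hmc, mul_assoc]
    apply mul_le_mul_of_nonneg_left _ (le_of_lt hmc)
    calc |∑ k : Fin m, (a k * deriv σ (L k W)) * L k v|
        ≤ ∑ k : Fin m, |(a k * deriv σ (L k W)) * L k v| := Finset.abs_sum_le_sum_abs _ _
      _ ≤ ∑ k : Fin m, B' * |L k v| := by
          apply Finset.sum_le_sum
          intro k _
          rw [abs_mul, abs_mul]
          have hak : |a k| = 1 := by rcases ha k with h | h <;> simp [h]
          rw [hak, one_mul]
          exact mul_le_mul_of_nonneg_right (hσ' _) (abs_nonneg _)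
      _ = B' * ∑ k : Fin m, |L k v| := by rw [Finset.mul_sum]
  -- Cauchy-Schwarz for the l1 norm
  have hCS : (∑ k : Fin m, |L k v|) ^ 2 ≤ (m : ℝ) * ∑ k : Fin m, (L k v) ^ 2 := by
    have := sq_sum_le_card_mul_sum_sq (s := (Finset.univ : Finset (Fin m)))
      (f := fun k => |L k v|)
    simpa [sq_abs] using this
  have hAsq : (Dφ W v) ^ 2 ≤ (m : ℝ) ^ (-c) * (m : ℝ) ^ (-c) * (m : ℝ) * B' ^ 2
      * (cx ^ 2 * ‖v‖ ^ 2) := by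
    have h1 : (Dφ W v) ^ 2 ≤ ((m : ℝ) ^ (-c) * B' * ∑ k : Fin m, |L k v|) ^ 2 := by
      rw [← sq_abs (Dφ W v)]
      exact pow_le_pow_left₀ (abs_nonneg _) hA 2
    calc (Dφ W v) ^ 2 ≤ ((m : ℝ) ^ (-c) * B') ^ 2 * (∑ k : Fin m, |L k v|) ^ 2 := by
          calc (Dφ W v) ^ 2 ≤ ((m : ℝ) ^ (-c) * B' * ∑ k : Fin m, |L k v|) ^ 2 := h1
            _ = ((m : ℝ) ^ (-c) * B') ^ 2 * (∑ k : Fin m, |L k v|) ^ 2 := by ring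
      _ ≤ ((m : ℝ) ^ (-c) * B') ^ 2 * ((m : ℝ) * ∑ k : Fin m, (L k v) ^ 2) := by
          exact mul_le_mul_of_nonneg_left hCS (sq_nonneg _)
      _ ≤ ((m : ℝ) ^ (-c) * B') ^ 2 * ((m : ℝ) * (cx ^ 2 * ‖v‖ ^ 2)) := by
          apply mul_le_mul_of_nonneg_left _ (sq_nonneg _)
          exact mul_le_mul_of_nonneg_left hS2 (le_of_lt hmpos)
      _ = (m : ℝ) ^ (-c) * (m : ℝ) ^ (-c) * (m : ℝ) * B' ^ 2 * (cx ^ 2 * ‖v‖ ^ 2) := by ring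
  -- bound on φ W
  have hφW : |φ W| ≤ (m : ℝ) ^ (-c) * (m : ℝ) * Bσ + cy := by
    calc |φ W| ≤ |(m : ℝ) ^ (-c) * ∑ k, a k * σ (L k W)| + |y| := abs_sub _ _
      _ ≤ (m : ℝ) ^ (-c) * ((m : ℝ) * Bσ) + cy := by
          apply add_le_add _ hy
          rw [abs_mul, abs_of_pos hmc]
          apply mul_le_mul_of_nonneg_left _ (le_of_lt hmc)
          calc |∑ k : Fin m, a k * σ (L k W)| ≤ ∑ k : Fin m, |a k * σ (L k W)| :=
                Finset.abs_sum_le_sum_abs _ _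
            _ ≤ ∑ k : Fin m, Bσ := by
                apply Finset.sum_le_sum
                intro k _
                rw [abs_mul]
                have hak : |a k| = 1 := by rcases ha k with h | h <;> simp [h]
                rw [hak, one_mul]
                exact hσ _
            _ = (m : ℝ) * Bσ := by simp [mul_comm]
      _ = (m : ℝ) ^ (-c) * (m : ℝ) * Bσ + cy := by ring
  -- bound on D2 v v
  have hC : |D2 v v| ≤ (m : ℝ) ^ (-c) * B'' * (cx ^ 2 * ‖v‖ ^ 2) := by
    have : D2 v v = (m : ℝ) ^ (-c)
        * ∑ k : Fin m, (a k * deriv (deriv σ) (L k W)) * L k v * L k v := by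
      simp only [hD2def, ContinuousLinearMap.smul_apply, ContinuousLinearMap.sum_apply,
        ContinuousLinearMap.smulRight_apply, smul_eq_mul]
    rw [this, abs_mul, abs_of_pos hmc, mul_assoc]
    apply mul_le_mul_of_nonneg_left _ (le_of_lt hmc)
    calc |∑ k : Fin m, (a k * deriv (deriv σ) (L k W)) * L k v * L k v|
        ≤ ∑ k : Fin m, |(a k * deriv (deriv σ) (L k W)) * L k v * L k v| :=
          Finset.abs_sum_le_sum_abs _ _
      _ ≤ ∑ k : Fin m, B'' * (L k v) ^ 2 := by
          apply Finset.sum_le_sum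
          intro k _
          rw [abs_mul, abs_mul, abs_mul]
          have hak : |a k| = 1 := by rcases ha k with h | h <;> simp [h]
          rw [hak, one_mul]
          have : |L k v| * |L k v| = (L k v) ^ 2 := by rw [← sq_abs]; ring
          rw [mul_assoc, this]
          exact mul_le_mul_of_nonneg_right (hσ'' _) (sq_nonneg _)
      _ = B'' * ∑ k : Fin m, (L k v) ^ 2 := by rw [Finset.mul_sum]
      _ ≤ B'' * (cx ^ 2 * ‖v‖ ^ 2) := mul_le_mul_of_nonneg_left hS2 hB''
  -- combine
  have hcombine : (Dφ W v) ^ 2 + φ W * (D2 v v)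
      ≤ (m : ℝ) ^ (-c) * (m : ℝ) ^ (-c) * (m : ℝ) * B' ^ 2 * (cx ^ 2 * ‖v‖ ^ 2)
        + ((m : ℝ) ^ (-c) * (m : ℝ) * Bσ + cy)
          * ((m : ℝ) ^ (-c) * B'' * (cx ^ 2 * ‖v‖ ^ 2)) := by
    apply add_le_add hAsq
    calc φ W * (D2 v v) ≤ |φ W * (D2 v v)| := le_abs_self _
      _ = |φ W| * |D2 v v| := abs_mul _ _
      _ ≤ ((m : ℝ) ^ (-c) * (m : ℝ) * Bσ + cy) * ((m : ℝ) ^ (-c) * B'' * (cx ^ 2 * ‖v‖ ^ 2)) :=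
          mul_le_mul hφW hC (abs_nonneg _) (by positivity)
  refine le_trans hcombine (le_of_eq ?_)
  rw [div_eq_mul_inv, div_eq_mul_inv, ← Real.rpow_neg hmpos.le, ← Real.rpow_neg hmpos.le,
    show -(2 * c - 1) = -c + (-c + 1) by ring, Real.rpow_add hmpos, Real.rpow_add hmpos,
    Real.rpow_one]
  ring
end

section
/- Let $\ell(W;z) = \frac{1}{2}(f_W(x)-y)^2$ with $f_W$ the two-layer network as above, and fix a reference point $W_0$ with $\ell(W_0;z) \le c_0$. Then for every $W$, the smallest eigenvalue of $\nabla_W^2 \ell(W;z)$ satisfies $\lambda_{\min}(\nabla^2 \ell(W;z)) \ge -\big( \frac{c_x^3 B_{\sigma'} B_{\sigma''}}{m^{2c - 1/2}} \|W - W_0\|_F + \frac{c_x^2 B_{\sigma''} \sqrt{2 c_0}}{m^c}\big)$. -/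
open scoped InnerProductSpace

open scoped InnerProductSpace

noncomputable def TL.Lk {d m : ℕ} (x : EuclideanSpace ℝ (Fin d)) (k : Fin m) :
    PiLp 2 (fun _ : Fin m => EuclideanSpace ℝ (Fin d)) →L[ℝ] ℝ :=
  (innerSL ℝ x).comp (PiLp.proj 2 _ k)

lemma TL.Lk_apply {d m : ℕ} (x : EuclideanSpace ℝ (Fin d)) (k : Fin m)
    (V : PiLp 2 (fun _ : Fin m => EuclideanSpace ℝ (Fin d))) :
    TL.Lk x k V = ⟪V k, x⟫_ℝ := by
  simp only [TL.Lk, ContinuousLinearMap.comp_apply, PiLp.proj_apply, innerSL_apply_apply]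
  exact real_inner_comm _ _

noncomputable def TL.DF {d m : ℕ} (c : ℝ) (σ : ℝ → ℝ) (a : Fin m → ℝ)
    (x : EuclideanSpace ℝ (Fin d))
    (V : PiLp 2 (fun _ : Fin m => EuclideanSpace ℝ (Fin d))) :
    PiLp 2 (fun _ : Fin m => EuclideanSpace ℝ (Fin d)) →L[ℝ] ℝ :=
  ∑ k, ((m : ℝ) ^ (-c) * a k * deriv σ ⟪V k, x⟫_ℝ) • TL.Lk x k

lemma TL.hasFDerivAt_inner {d m : ℕ} (x : EuclideanSpace ℝ (Fin d)) (k : Fin m)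
    (V : PiLp 2 (fun _ : Fin m => EuclideanSpace ℝ (Fin d))) :
    HasFDerivAt (fun V : PiLp 2 (fun _ : Fin m => EuclideanSpace ℝ (Fin d)) =>
      ⟪V k, x⟫_ℝ) (TL.Lk x k) V := by
  have h : (fun V : PiLp 2 (fun _ : Fin m => EuclideanSpace ℝ (Fin d)) => ⟪V k, x⟫_ℝ)
      = ⇑(TL.Lk x k) := funext fun V => (TL.Lk_apply x k V).symm
  rw [h]
  exact (TL.Lk x k).hasFDerivAt

lemma TL.hasFDerivAt_F {d m : ℕ} (c : ℝ) (σ : ℝ → ℝ) (hσd : Differentiable ℝ σ)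
    (a : Fin m → ℝ) (x : EuclideanSpace ℝ (Fin d))
    (V : PiLp 2 (fun _ : Fin m => EuclideanSpace ℝ (Fin d))) :
    HasFDerivAt (fun V : PiLp 2 (fun _ : Fin m => EuclideanSpace ℝ (Fin d)) =>
        (m : ℝ) ^ (-c) * ∑ k, a k * σ ⟪V k, x⟫_ℝ)
      (TL.DF c σ a x V) V := by
  have h1 : ∀ k : Fin m, HasFDerivAt
      (fun V : PiLp 2 (fun _ : Fin m => EuclideanSpace ℝ (Fin d)) => a k * σ ⟪V k, x⟫_ℝ)
      ((a k * deriv σ ⟪V k, x⟫_ℝ) • TL.Lk x k) V := by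
    intro k
    have hσk := (hσd ⟪V k, x⟫_ℝ).hasDerivAt
    have := (hσk.comp_hasFDerivAt V (TL.hasFDerivAt_inner x k V)).const_mul (a k)
    rw [← smul_smul]
    exact this
  have hs := (HasFDerivAt.fun_sum (fun k (_ : k ∈ Finset.univ) => h1 k)).const_mul ((m : ℝ) ^ (-c))
  refine hs.congr_fderiv ?_
  symm
  rw [TL.DF, Finset.smul_sum]
  congr 1
  funext k
  rw [smul_smul, mul_assoc]
open scoped InnerProductSpace

section
variable {d m : ℕ}

set_option maxHeartbeats 1000000 in
set_option synthInstance.maxHeartbeats 400000 in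
lemma TL.key (c : ℝ) (σ : ℝ → ℝ) (hσd : Differentiable ℝ σ)
    (hσ'd : Differentiable ℝ (deriv σ))
    (a : Fin m → ℝ) (x : EuclideanSpace ℝ (Fin d)) (y : ℝ)
    (W v : PiLp 2 (fun _ : Fin m => EuclideanSpace ℝ (Fin d))) :
    iteratedFDeriv ℝ 2
        (fun V : PiLp 2 (fun _ : Fin m => EuclideanSpace ℝ (Fin d)) =>
          (1 / 2 : ℝ) * ((m : ℝ) ^ (-c) * ∑ k, a k * σ ⟪V k, x⟫_ℝ - y) ^ 2) W ![v, v]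
      = (TL.DF c σ a x W v) ^ 2
        + ((m : ℝ) ^ (-c) * ∑ k, a k * σ ⟪W k, x⟫_ℝ - y)
          * ∑ k, ((m : ℝ) ^ (-c) * a k * deriv (deriv σ) ⟪W k, x⟫_ℝ) * (TL.Lk x k v) ^ 2 := by
  classical
  set F : PiLp 2 (fun _ : Fin m => EuclideanSpace ℝ (Fin d)) → ℝ :=
    fun V => (m : ℝ) ^ (-c) * ∑ k, a k * σ ⟪V k, x⟫_ℝ with hFdef
  have hF : ∀ V, HasFDerivAt F (TL.DF c σ a x V) V := fun V =>
    TL.hasFDerivAt_F c σ hσd a x V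
  -- first derivative of the loss
  have hGd : ∀ V, HasFDerivAt (fun V => (1 / 2 : ℝ) * (F V - y) ^ 2)
      ((F V - y) • TL.DF c σ a x V) V := by
    intro V
    have heq : (fun V => (1 / 2 : ℝ) * (F V - y) ^ 2)
        = fun V => (1 / 2 : ℝ) * ((F V - y) * (F V - y)) := by
      funext V; ring
    rw [heq]
    have := (((hF V).sub_const y).mul ((hF V).sub_const y)).const_mul (1 / 2 : ℝ)
    refine this.congr_fderiv ?_
    symm
    ext w
    simp only [ContinuousLinearMap.smul_apply, ContinuousLinearMap.add_apply, smul_eq_mul]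
    ring
  have hfder : fderiv ℝ (fun V => (1 / 2 : ℝ) * (F V - y) ^ 2)
      = fun V => ∑ k, ((F V - y) * ((m : ℝ) ^ (-c) * a k * deriv σ ⟪V k, x⟫_ℝ)) • TL.Lk x k := by
    funext V
    rw [(hGd V).fderiv, TL.DF, Finset.smul_sum]
    congr 1
    funext k
    rw [smul_smul]
  -- second derivative
  have hr : ∀ k : Fin m, HasFDerivAt
      (fun V : PiLp 2 (fun _ : Fin m => EuclideanSpace ℝ (Fin d)) =>
        (F V - y) * ((m : ℝ) ^ (-c) * a k * deriv σ ⟪V k, x⟫_ℝ))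
      ((F W - y) • (((m : ℝ) ^ (-c) * a k) •
          (deriv (deriv σ) ⟪W k, x⟫_ℝ • TL.Lk x k))
        + ((m : ℝ) ^ (-c) * a k * deriv σ ⟪W k, x⟫_ℝ) • TL.DF c σ a x W) W := by
    intro k
    have h1 : HasFDerivAt
        (fun V : PiLp 2 (fun _ : Fin m => EuclideanSpace ℝ (Fin d)) =>
          (m : ℝ) ^ (-c) * a k * deriv σ ⟪V k, x⟫_ℝ)
        (((m : ℝ) ^ (-c) * a k) • (deriv (deriv σ) ⟪W k, x⟫_ℝ • TL.Lk x k)) W := by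
      have hd := (hσ'd ⟪W k, x⟫_ℝ).hasDerivAt
      have := (hd.comp_hasFDerivAt W (TL.hasFDerivAt_inner x k W)).const_mul
        ((m : ℝ) ^ (-c) * a k)
      exact this
    exact ((hF W).sub_const y).mul h1
  have hG := HasFDerivAt.fun_sum (u := Finset.univ)
    (fun k (_ : k ∈ Finset.univ) => (hr k).smul_const (TL.Lk x k))
  haveI : ContinuousSMul ℝ (PiLp 2 fun _ : Fin m => EuclideanSpace ℝ (Fin d)) := inferInstance
  rw [iteratedFDeriv_two_apply, hfder, hG.fderiv]
  simp only [Matrix.cons_val_zero, Matrix.cons_val_one, Matrix.head_cons,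
    ContinuousLinearMap.sum_apply, ContinuousLinearMap.smulRight_apply,
    ContinuousLinearMap.add_apply, ContinuousLinearMap.smul_apply, smul_eq_mul]
  have hS : TL.DF c σ a x W v
      = ∑ k, ((m : ℝ) ^ (-c) * a k * deriv σ ⟪W k, x⟫_ℝ) * TL.Lk x k v := by
    rw [TL.DF]
    simp [ContinuousLinearMap.sum_apply]
  have hterm : ∀ k ∈ Finset.univ,
      ((F W - y) * ((m : ℝ) ^ (-c) * a k * (deriv (deriv σ) ⟪W k, x⟫_ℝ * TL.Lk x k v))
        + ((m : ℝ) ^ (-c) * a k * deriv σ ⟪W k, x⟫_ℝ) * TL.DF c σ a x W v) * TL.Lk x k v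
      = (((m : ℝ) ^ (-c) * a k * deriv σ ⟪W k, x⟫_ℝ) * TL.Lk x k v) * TL.DF c σ a x W v
        + (F W - y) * (((m : ℝ) ^ (-c) * a k * deriv (deriv σ) ⟪W k, x⟫_ℝ) * (TL.Lk x k v) ^ 2) := by
    intro k _
    ring
  rw [Finset.sum_congr rfl hterm, Finset.sum_add_distrib, ← Finset.sum_mul, ← Finset.mul_sum,
    ← hS, ← sq]
end

/-- Weak convexity (curvature lower bound) for the square loss of a two-layer network:
the smallest eigenvalue of the Hessian of `W ↦ ½(f_W(x) - y)²` is at least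
`-(c_x³ B_{σ'} B_{σ''} / m^{2c-1/2} ‖W - W_0‖_F + c_x² B_{σ''} √(2c_0) / m^c)`,
where `ℓ(W_0; z) ≤ c_0`, expressed via the Hessian quadratic form. -/
theorem two_layer_loss_hessian_lower_bound {d m : ℕ} (hm : 0 < m)
    (c cx c0 Bσ B' B'' : ℝ) (hc : c ∈ Set.Icc (1 / 2 : ℝ) 1)
    (σ : ℝ → ℝ) (hσsmooth : ContDiff ℝ 2 σ)
    (hσ : ∀ t : ℝ, |σ t| ≤ Bσ) (hσ' : ∀ t : ℝ, |deriv σ t| ≤ B')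
    (hσ'' : ∀ t : ℝ, |deriv (deriv σ) t| ≤ B'')
    (a : Fin m → ℝ) (ha : ∀ k, a k = 1 ∨ a k = -1)
    (x : EuclideanSpace ℝ (Fin d)) (hx : ‖x‖ ≤ cx)
    (y : ℝ)
    (W0 : PiLp 2 (fun _ : Fin m => EuclideanSpace ℝ (Fin d)))
    (hW0 : (1 / 2) * ((m : ℝ) ^ (-c) * ∑ k, a k * σ ⟪W0 k, x⟫_ℝ - y) ^ 2 ≤ c0)
    (W : PiLp 2 (fun _ : Fin m => EuclideanSpace ℝ (Fin d))) :
    ∀ v : PiLp 2 (fun _ : Fin m => EuclideanSpace ℝ (Fin d)),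
      iteratedFDeriv ℝ 2
          (fun V : PiLp 2 (fun _ : Fin m => EuclideanSpace ℝ (Fin d)) =>
            (1 / 2) * ((m : ℝ) ^ (-c) * ∑ k, a k * σ ⟪V k, x⟫_ℝ - y) ^ 2) W ![v, v]
        ≥ -(cx ^ 3 * B' * B'' / (m : ℝ) ^ (2 * c - 1 / 2) * ‖W - W0‖
            + cx ^ 2 * B'' * Real.sqrt (2 * c0) / (m : ℝ) ^ c) * ‖v‖ ^ 2 := by
  intro v
  have hσd : Differentiable ℝ σ := hσsmooth.differentiable (by norm_num)
  have h21 : (2 : WithTop ℕ∞) = 1 + 1 := by norm_num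
  have hσ'd : Differentiable ℝ (deriv σ) :=
    ((contDiff_succ_iff_deriv.mp (h21 ▸ hσsmooth)).2.2).differentiable (by norm_num)
  rw [TL.key c σ hσd hσ'd a x y W v]
  have hm' : (0 : ℝ) < m := by exact_mod_cast hm
  have hmc : (0 : ℝ) < (m : ℝ) ^ (-c) := Real.rpow_pos_of_pos hm' _
  have hcx0 : (0 : ℝ) ≤ cx := le_trans (norm_nonneg x) hx
  have hB'0 : (0 : ℝ) ≤ B' := (abs_nonneg _).trans (hσ' 0)
  have hB''0 : (0 : ℝ) ≤ B'' := (abs_nonneg _).trans (hσ'' 0)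
  have ha1 : ∀ k, |a k| = 1 := fun k => by rcases ha k with h | h <;> simp [h]
  -- bound on |L_k v|
  have hp : ∀ k : Fin m, |TL.Lk x k v| ≤ cx * ‖v k‖ := by
    intro k
    rw [TL.Lk_apply]
    calc |⟪v k, x⟫_ℝ| ≤ ‖v k‖ * ‖x‖ := abs_real_inner_le_norm _ _
      _ ≤ ‖v k‖ * cx := by
          exact mul_le_mul_of_nonneg_left hx (norm_nonneg _)
      _ = cx * ‖v k‖ := mul_comm _ _
  -- bound on the curvature sum T
  have hT : |∑ k, ((m : ℝ) ^ (-c) * a k * deriv (deriv σ) ⟪W k, x⟫_ℝ) * (TL.Lk x k v) ^ 2|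
      ≤ (m : ℝ) ^ (-c) * B'' * (cx ^ 2 * ‖v‖ ^ 2) := by
    calc |∑ k, ((m : ℝ) ^ (-c) * a k * deriv (deriv σ) ⟪W k, x⟫_ℝ) * (TL.Lk x k v) ^ 2|
        ≤ ∑ k, |((m : ℝ) ^ (-c) * a k * deriv (deriv σ) ⟪W k, x⟫_ℝ) * (TL.Lk x k v) ^ 2| :=
          Finset.abs_sum_le_sum_abs _ _
      _ ≤ ∑ k, ((m : ℝ) ^ (-c) * B'') * (cx ^ 2 * ‖v k‖ ^ 2) := by
          refine Finset.sum_le_sum fun k _ => ?_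
          rw [abs_mul, abs_mul, abs_mul]
          have h1 : |(m : ℝ) ^ (-c)| = (m : ℝ) ^ (-c) := abs_of_pos hmc
          have h2 : |(TL.Lk x k v) ^ 2| = (TL.Lk x k v) ^ 2 := abs_of_nonneg (sq_nonneg _)
          rw [h1, h2, ha1 k, mul_one]
          have h3 : (TL.Lk x k v) ^ 2 ≤ cx ^ 2 * ‖v k‖ ^ 2 := by
            have := pow_le_pow_left₀ (abs_nonneg (TL.Lk x k v)) (hp k) 2
            rw [sq_abs, mul_pow] at this
            exact this
          have h4 : (m : ℝ) ^ (-c) * |deriv (deriv σ) ⟪W k, x⟫_ℝ| ≤ (m : ℝ) ^ (-c) * B'' :=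
            mul_le_mul_of_nonneg_left (hσ'' _) hmc.le
          exact mul_le_mul h4 h3 (sq_nonneg _) (by positivity)
      _ = ((m : ℝ) ^ (-c) * B'') * (cx ^ 2 * ∑ k, ‖v k‖ ^ 2) := by
          simp only [Finset.mul_sum]
      _ = (m : ℝ) ^ (-c) * B'' * (cx ^ 2 * ‖v‖ ^ 2) := by
          rw [PiLp.norm_sq_eq_of_L2 (fun _ : Fin m => EuclideanSpace ℝ (Fin d)) v]
  -- Lipschitz bound for σ
  have hlip : ∀ s t : ℝ, |σ t - σ s| ≤ B' * |t - s| := by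
    intro s t
    have := Convex.norm_image_sub_le_of_norm_deriv_le (f := σ) (s := Set.univ)
      (fun z _ => hσd z) (fun z _ => by rw [Real.norm_eq_abs]; exact hσ' z)
      convex_univ (Set.mem_univ s) (Set.mem_univ t)
    simpa [Real.norm_eq_abs] using this
  -- bound on |F W0 - y|
  have hW0' : |(m : ℝ) ^ (-c) * ∑ k, a k * σ ⟪W0 k, x⟫_ℝ - y| ≤ Real.sqrt (2 * c0) := by
    have h2 : ((m : ℝ) ^ (-c) * ∑ k, a k * σ ⟪W0 k, x⟫_ℝ - y) ^ 2 ≤ 2 * c0 := by nlinarith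
    calc |(m : ℝ) ^ (-c) * ∑ k, a k * σ ⟪W0 k, x⟫_ℝ - y|
        = Real.sqrt (((m : ℝ) ^ (-c) * ∑ k, a k * σ ⟪W0 k, x⟫_ℝ - y) ^ 2) :=
          (Real.sqrt_sq_eq_abs _).symm
      _ ≤ Real.sqrt (2 * c0) := Real.sqrt_le_sqrt h2
  -- sum of norms vs PiLp norm
  have hsum_norm : ∑ k, ‖W k - W0 k‖ ≤ (m : ℝ) ^ ((1 : ℝ) / 2) * ‖W - W0‖ := by
    have h2 : (∑ k, ‖W k - W0 k‖) ^ 2 ≤ (m : ℝ) * ∑ k, ‖W k - W0 k‖ ^ 2 := by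
      simpa using sq_sum_le_card_mul_sum_sq (s := (Finset.univ : Finset (Fin m)))
        (f := fun k => ‖W k - W0 k‖)
    have h3 : ∑ k, ‖W k - W0 k‖ ^ 2 = ‖W - W0‖ ^ 2 := by
      rw [PiLp.norm_sq_eq_of_L2 (fun _ : Fin m => EuclideanSpace ℝ (Fin d)) (W - W0)]
      rfl
    have h4 : ∑ k, ‖W k - W0 k‖ ≤ Real.sqrt ((m : ℝ) * ‖W - W0‖ ^ 2) := by
      rw [← h3]
      have h5 := Real.sqrt_le_sqrt h2
      rwa [Real.sqrt_sq (Finset.sum_nonneg fun k _ => norm_nonneg _)] at h5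
    calc ∑ k, ‖W k - W0 k‖ ≤ Real.sqrt ((m : ℝ) * ‖W - W0‖ ^ 2) := h4
      _ = (m : ℝ) ^ ((1 : ℝ) / 2) * ‖W - W0‖ := by
          rw [Real.sqrt_mul hm'.le, Real.sqrt_sq (norm_nonneg _), Real.sqrt_eq_rpow]
  -- bound on |F W - F W0|
  have hFF : |(m : ℝ) ^ (-c) * ∑ k, a k * σ ⟪W k, x⟫_ℝ
      - (m : ℝ) ^ (-c) * ∑ k, a k * σ ⟪W0 k, x⟫_ℝ|
      ≤ (m : ℝ) ^ (-c) * (B' * cx * ∑ k, ‖W k - W0 k‖) := by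
    have heq : (m : ℝ) ^ (-c) * ∑ k, a k * σ ⟪W k, x⟫_ℝ
        - (m : ℝ) ^ (-c) * ∑ k, a k * σ ⟪W0 k, x⟫_ℝ
        = (m : ℝ) ^ (-c) * ∑ k, a k * (σ ⟪W k, x⟫_ℝ - σ ⟪W0 k, x⟫_ℝ) := by
      rw [Finset.mul_sum, Finset.mul_sum, Finset.mul_sum, ← Finset.sum_sub_distrib]
      congr 1
      funext k
      ring
    rw [heq, abs_mul, abs_of_pos hmc]
    refine mul_le_mul_of_nonneg_left ?_ hmc.le
    calc |∑ k, a k * (σ ⟪W k, x⟫_ℝ - σ ⟪W0 k, x⟫_ℝ)|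
        ≤ ∑ k, |a k * (σ ⟪W k, x⟫_ℝ - σ ⟪W0 k, x⟫_ℝ)| := Finset.abs_sum_le_sum_abs _ _
      _ ≤ ∑ k, B' * cx * ‖W k - W0 k‖ := by
          refine Finset.sum_le_sum fun k _ => ?_
          rw [abs_mul, ha1 k, one_mul]
          calc |σ ⟪W k, x⟫_ℝ - σ ⟪W0 k, x⟫_ℝ| ≤ B' * |⟪W k, x⟫_ℝ - ⟪W0 k, x⟫_ℝ| :=
                hlip _ _
            _ = B' * |⟪W k - W0 k, x⟫_ℝ| := by rw [← inner_sub_left]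
            _ ≤ B' * (‖W k - W0 k‖ * ‖x‖) :=
                mul_le_mul_of_nonneg_left (abs_real_inner_le_norm _ _) hB'0
            _ ≤ B' * (‖W k - W0 k‖ * cx) := by
                refine mul_le_mul_of_nonneg_left ?_ hB'0
                exact mul_le_mul_of_nonneg_left hx (norm_nonneg _)
            _ = B' * cx * ‖W k - W0 k‖ := by ring
      _ = B' * cx * ∑ k, ‖W k - W0 k‖ := by rw [← Finset.mul_sum]
  -- full bound on |F W - y|
  have hu : |(m : ℝ) ^ (-c) * ∑ k, a k * σ ⟪W k, x⟫_ℝ - y|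
      ≤ cx * B' * ((m : ℝ) ^ ((1 : ℝ) / 2) * (m : ℝ) ^ (-c)) * ‖W - W0‖
        + Real.sqrt (2 * c0) := by
    have htri := abs_sub_le ((m : ℝ) ^ (-c) * ∑ k, a k * σ ⟪W k, x⟫_ℝ)
      ((m : ℝ) ^ (-c) * ∑ k, a k * σ ⟪W0 k, x⟫_ℝ) y
    have h6 : (m : ℝ) ^ (-c) * (B' * cx * ∑ k, ‖W k - W0 k‖)
        ≤ cx * B' * ((m : ℝ) ^ ((1 : ℝ) / 2) * (m : ℝ) ^ (-c)) * ‖W - W0‖ := by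
      have h7 : B' * cx * ∑ k, ‖W k - W0 k‖
          ≤ B' * cx * ((m : ℝ) ^ ((1 : ℝ) / 2) * ‖W - W0‖) :=
        mul_le_mul_of_nonneg_left hsum_norm (by positivity)
      calc (m : ℝ) ^ (-c) * (B' * cx * ∑ k, ‖W k - W0 k‖)
          ≤ (m : ℝ) ^ (-c) * (B' * cx * ((m : ℝ) ^ ((1 : ℝ) / 2) * ‖W - W0‖)) :=
            mul_le_mul_of_nonneg_left h7 hmc.le
        _ = cx * B' * ((m : ℝ) ^ ((1 : ℝ) / 2) * (m : ℝ) ^ (-c)) * ‖W - W0‖ := by ring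
    linarith [hFF, hW0']
  -- combine
  set S := TL.DF c σ a x W v with hSdef
  set u := (m : ℝ) ^ (-c) * ∑ k, a k * σ ⟪W k, x⟫_ℝ - y with hudef
  set T := ∑ k, ((m : ℝ) ^ (-c) * a k * deriv (deriv σ) ⟪W k, x⟫_ℝ) * (TL.Lk x k v) ^ 2
    with hTdef
  have habs : |u * T| ≤ (cx * B' * ((m : ℝ) ^ ((1 : ℝ) / 2) * (m : ℝ) ^ (-c)) * ‖W - W0‖
      + Real.sqrt (2 * c0)) * ((m : ℝ) ^ (-c) * B'' * (cx ^ 2 * ‖v‖ ^ 2)) := by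
    rw [abs_mul]
    exact mul_le_mul hu hT (abs_nonneg _) (by positivity)
  have e1 : ((m : ℝ) ^ (2 * c - 1 / 2 : ℝ))⁻¹
      = (m : ℝ) ^ ((1 : ℝ) / 2) * ((m : ℝ) ^ (-c) * (m : ℝ) ^ (-c)) := by
    rw [← Real.rpow_neg hm'.le]
    have : -(2 * c - 1 / 2) = 1 / 2 + (-c + -c) := by ring
    rw [this, Real.rpow_add hm', Real.rpow_add hm']
  have e2 : ((m : ℝ) ^ (c : ℝ))⁻¹ = (m : ℝ) ^ (-c) := (Real.rpow_neg hm'.le c).symm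
  have hE : (cx * B' * ((m : ℝ) ^ ((1 : ℝ) / 2) * (m : ℝ) ^ (-c)) * ‖W - W0‖
        + Real.sqrt (2 * c0)) * ((m : ℝ) ^ (-c) * B'' * (cx ^ 2 * ‖v‖ ^ 2))
      = (cx ^ 3 * B' * B'' / (m : ℝ) ^ (2 * c - 1 / 2) * ‖W - W0‖
        + cx ^ 2 * B'' * Real.sqrt (2 * c0) / (m : ℝ) ^ c) * ‖v‖ ^ 2 := by
    rw [div_eq_mul_inv (cx ^ 3 * B' * B'') ((m : ℝ) ^ (2 * c - 1 / 2)),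
      div_eq_mul_inv (cx ^ 2 * B'' * Real.sqrt (2 * c0)) ((m : ℝ) ^ c), e1, e2]
    ring
  rw [hE] at habs
  have h1 : -((cx ^ 3 * B' * B'' / (m : ℝ) ^ (2 * c - 1 / 2) * ‖W - W0‖
      + cx ^ 2 * B'' * Real.sqrt (2 * c0) / (m : ℝ) ^ c) * ‖v‖ ^ 2) ≤ u * T := by
    exact le_trans (neg_le_neg habs) (neg_abs_le (u * T))
  calc S ^ 2 + u * T
      ≥ 0 + -((cx ^ 3 * B' * B'' / (m : ℝ) ^ (2 * c - 1 / 2) * ‖W - W0‖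
        + cx ^ 2 * B'' * Real.sqrt (2 * c0) / (m : ℝ) ^ c) * ‖v‖ ^ 2) :=
      add_le_add (sq_nonneg S) h1
    _ = -(cx ^ 3 * B' * B'' / (m : ℝ) ^ (2 * c - 1 / 2) * ‖W - W0‖
        + cx ^ 2 * B'' * Real.sqrt (2 * c0) / (m : ℝ) ^ c) * ‖v‖ ^ 2 := by ring
end
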